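/- Let α ∈ KS. Then q(α) = 0 if and only if α = 10^∞ (the sequence 1 followed by all 0s); and q(α) = 1/2 if and only if α ⪯ 101^∞ (the sequence 10 followed by all 1s) in the unimodal order. -/

import Mathlib

open Set

/-- Binary sequences. -/
abbrev Bseq := ℕ → Fin 2

/-- The strict unimodal order on binary sequences: `α ≺ β` iff at the least index `r` where
they differ, the sum `∑_{i=0}^r α_i` is even. -/
def umLT (α β : Bseq) : Prop :=
  ∃ r : ℕ, (∀ i, i < r → α i = β i) ∧ α r ≠ β r ∧
    Even (∑ i ∈ Finset.range (r + 1), ((α i : ℕ)))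

/-- `α ⪯ β` in the unimodal order. -/
def umLE (α β : Bseq) : Prop := umLT α β ∨ α = β

/-- The `r`-fold shift `σ^r`. -/
def shiftSeq (r : ℕ) (α : Bseq) : Bseq := fun i => α (i + r)

/-- A sequence is maximal if all its shifts are `⪯` it. -/
def MaximalSeq (α : Bseq) : Prop := ∀ r : ℕ, umLE (shiftSeq r α) α

/-- Membership in `KS`: maximal sequences whose first two symbols are `10`. -/
def KSseq (α : Bseq) : Prop := MaximalSeq α ∧ α 0 = 1 ∧ α 1 = 0

/-- A (purely) periodic sequence. -/
def PeriodicSeq (α : Bseq) : Prop := ∃ p : ℕ, 0 < p ∧ ∀ i, α (i + p) = α i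

/-- The periodic sequence `W^∞` determined by a finite word `W`. -/
def perSeq (W : List (Fin 2)) : Bseq := fun i => W.getD (i % W.length) 0

/-- The sequence `V W^∞`. -/
def preperSeq (V W : List (Fin 2)) : Bseq :=
  fun i => if i < V.length then V.getD i 0 else perSeq W (i - V.length)

/-- The sequence `10 1^∞`. -/
def seq101 : Bseq := fun i => if i = 1 then 0 else 1

/-- The sequence `1σ²(α)`: `1` followed by `α₂ α₃ ⋯`. -/
def oneShift2 (α : Bseq) : Bseq := fun i => if i = 0 then 1 else α (i + 1)

/-- `κ_i(q)`: `κ_1(q) = ⌊1/q⌋ - 1`, and `κ_i(q) = ⌊i/q⌋ - ⌊(i-1)/q⌋ - 2` for `i ≥ 2`. -/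
noncomputable def kap (q : ℝ) (i : ℕ) : ℕ :=
  if i = 1 then (⌊1 / q⌋ - 1).toNat
  else (⌊(i : ℝ) / q⌋ - ⌊((i : ℝ) - 1) / q⌋ - 2).toNat

/-- The word `1 0^{κ_j(q)} 11 0^{κ_{j+1}(q)} 11 ⋯ 11 0^{κ_{j+M}(q)}`: an initial block
indexed `j` followed by `M` further blocks. -/
noncomputable def tailBody (q : ℝ) (j M : ℕ) : List (Fin 2) :=
  1 :: (List.replicate (kap q j) 0 ++
    (((List.range M).map fun t => 1 :: 1 :: List.replicate (kap q (j + 1 + t)) 0).flatten))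

/-- The word `c_q = 1 0^{κ_1(q)} 11 0^{κ_2(q)} 11 ⋯ 11 0^{κ_m(q)} 1`. -/
noncomputable def cqWord (q : ℝ) (m : ℕ) : List (Fin 2) := tailBody q 1 (m - 1) ++ [1]

/-- The word `w_q`, obtained from `c_q` by deleting its last two symbols. -/
noncomputable def wqWord (q : ℝ) (m : ℕ) : List (Fin 2) := (cqWord q m).dropLast.dropLast

/-- The word `ŵ_q`, the reverse of `w_q`. -/
noncomputable def hwqWord (q : ℝ) (m : ℕ) : List (Fin 2) := (wqWord q m).reverse

/-- The finite word `1 0^{κ_j(q)} 11 0^{κ_{j+1}(q)} ⋯ 11 0^{κ_m(q)} 1`. -/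
noncomputable def tailWord (q : ℝ) (j m : ℕ) : List (Fin 2) := tailBody q j (m - j) ++ [1]

/-- The word `1 0^{κ_1(q)-1} 11 0^{κ_2(q)} 11 ⋯` with `M` blocks after the first
(no closing `1`). -/
noncomputable def lowBody (q : ℝ) (M : ℕ) : List (Fin 2) :=
  1 :: (List.replicate (kap q 1 - 1) 0 ++
    (((List.range M).map fun t => 1 :: 1 :: List.replicate (kap q (2 + t)) 0).flatten))

/-- The finite word `1 0^{κ_1(q)-1} 11 0^{κ_2(q)} ⋯ 11 0^{κ_m(q)} 1`. -/
noncomputable def lowWord (q : ℝ) (m : ℕ) : List (Fin 2) := lowBody q (m - 1) ++ [1]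

/-- The infinite sequence `1 0^{κ_j(q)} 11 0^{κ_{j+1}(q)} 11 0^{κ_{j+2}(q)} 11 ⋯`. -/
noncomputable def tailSeq (q : ℝ) (j : ℕ) : Bseq := fun i => (tailBody q j (i + 1)).getD i 0

/-- The infinite sequence `1 0^{κ_1(q)-1} 11 0^{κ_2(q)} 11 0^{κ_3(q)} 11 ⋯`. -/
noncomputable def lowSeq (q : ℝ) : Bseq := fun i => (lowBody q (i + 1)).getD i 0

/-- The height `q(α) = inf({q ∈ (0,1/2] ∩ ℚ : (c_q0)^∞ ≺ α} ∪ {1/2})`. -/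
noncomputable def height (α : Bseq) : ℝ :=
  sInf ({x : ℝ | ∃ q : ℚ, x = (q : ℝ) ∧ 0 < q ∧ q ≤ 1 / 2 ∧
    umLT (perSeq (cqWord (q : ℝ) q.num.toNat ++ [0])) α} ∪ {1 / 2})

/-- A unimodal map `f : [a,b] → [a,b]` with turning point `c`. -/
structure Unimodal (a b c : ℝ) (f : ℝ → ℝ) : Prop where
  a_lt_b : a < b
  c_mem : c ∈ Ioo a b
  cont : ContinuousOn f (Icc a b)
  maps : MapsTo f (Icc a b) (Icc a b)
  mono : StrictMonoOn f (Icc a c)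
  anti : StrictAntiOn f (Icc c b)
  map_c : f c = b
  map_b : f b = a

/-- `α` is an itinerary of `x` under the unimodal map `f` with turning point `c`. -/
def IsItin (f : ℝ → ℝ) (a b c x : ℝ) (α : Bseq) : Prop :=
  ∀ r : ℕ, (α r = 0 → f^[r] x ∈ Icc a c) ∧ (α r = 1 → f^[r] x ∈ Icc c b)

/-- `κ` is the kneading sequence of `f`: the itinerary of `b` smallest in the unimodal order. -/
def IsKneading (f : ℝ → ℝ) (a b c : ℝ) (κ : Bseq) : Prop :=
  IsItin f a b c b κ ∧ ∀ β : Bseq, IsItin f a b c b β → umLE κ β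

/-- The standing convention on unimodal maps. -/
structure Convention (f : ℝ → ℝ) (a b c : ℝ) (κ : Bseq) : Prop where
  kneading : IsKneading f a b c κ
  gt101 : umLT seq101 κ
  itin_inj : ¬ PeriodicSeq κ → ∀ x ∈ Icc a b, ∀ y ∈ Icc a b, ∀ α : Bseq,
      IsItin f a b c x α → IsItin f a b c y α → x = y
  two_fixed : ∀ n : ℕ, 0 < n → ∀ μ : Bseq,
      {x | x ∈ Icc a b ∧ f^[n] x = x ∧ IsItin f a b c x μ}.encard ≤ 2 ∧
      ∀ x ∈ {x | x ∈ Icc a b ∧ f^[n] x = x ∧ IsItin f a b c x μ},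
        ∀ y ∈ {x | x ∈ Icc a b ∧ f^[n] x = x ∧ IsItin f a b c x μ},
          x ≠ y → ∃ r : ℕ, κ = shiftSeq r μ


open Finset in
lemma fin2_ne_sum (x y : Fin 2) (h : x ≠ y) : (x:ℕ) + (y:ℕ) = 1 := by
  fin_cases x <;> fin_cases y <;> simp_all

lemma fin2_eq_zero (x : Fin 2) (h : x ≠ 1) : x = 0 := by
  fin_cases x <;> simp_all

lemma fin2_eq_one (x : Fin 2) (h : x ≠ 0) : x = 1 := by
  fin_cases x <;> simp_all

lemma sum_front1 (γ : Bseq) (h0 : γ 0 = 1) :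
    ∀ s, 1 ≤ s → (∀ i, 1 ≤ i → i < s → γ i = 0) →
    ∑ i ∈ Finset.range s, ((γ i : ℕ)) = 1 := by
  intro s
  induction s with
  | zero => omega
  | succ n ih =>
    intro hs hz
    rcases Nat.lt_or_ge 1 (n+1) with h | h
    · have hn : 1 ≤ n := by omega
      rw [Finset.sum_range_succ, ih hn (fun i h1 h2 => hz i h1 (by omega)),
        hz n hn (by omega)]
      simp
    · have : n = 0 := by omega
      subst this
      simp [h0]

lemma sum_front2 (γ : Bseq) (h0 : γ 0 = 1) (h1 : γ 1 = 0) :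
    ∀ s, 2 ≤ s → (∀ i, 2 ≤ i → i < s → γ i = 1) →
    ∑ i ∈ Finset.range s, ((γ i : ℕ)) = s - 1 := by
  intro s
  induction s with
  | zero => omega
  | succ n ih =>
    intro hs hz
    rcases Nat.lt_or_ge 2 (n+1) with h | h
    · have hn : 2 ≤ n := by omega
      rw [Finset.sum_range_succ, ih hn (fun i h1 h2 => hz i h1 (by omega)),
        hz n hn (by omega)]
      omega
    · have : n = 1 := by omega
      subst this
      simp [Finset.sum_range_succ, h0, h1]

lemma umLT_total (α β : Bseq) (h : α ≠ β) : umLT α β ∨ umLT β α := by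
  classical
  have hex : ∃ r, α r ≠ β r := by
    by_contra hc
    push_neg at hc
    exact h (funext hc)
  set r := Nat.find hex with hr
  have hd : α r ≠ β r := Nat.find_spec hex
  have hmin : ∀ i, i < r → α i = β i := by
    intro i hi
    have := Nat.find_min hex hi
    simpa using this
  have hsum : ∑ i ∈ Finset.range (r+1), ((α i:ℕ)) + ∑ i ∈ Finset.range (r+1), ((β i:ℕ))
      = 2 * (∑ i ∈ Finset.range r, ((α i:ℕ))) + 1 := by
    rw [Finset.sum_range_succ, Finset.sum_range_succ]
    have h2 : ∑ i ∈ Finset.range r, ((β i:ℕ)) = ∑ i ∈ Finset.range r, ((α i:ℕ)) :=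
      Finset.sum_congr rfl (fun i hi => by rw [hmin i (Finset.mem_range.mp hi)])
    rw [h2]
    have := fin2_ne_sum _ _ hd
    omega
  rcases Nat.even_or_odd (∑ i ∈ Finset.range (r+1), ((α i:ℕ))) with he | ho
  · exact Or.inl ⟨r, hmin, hd, he⟩
  · refine Or.inr ⟨r, fun i hi => (hmin i hi).symm, fun hc => hd hc.symm, ?_⟩
    rw [Nat.even_iff]
    rw [Nat.odd_iff] at ho
    omega

lemma perSeq_eq_getD (W : List (Fin 2)) (i : ℕ) (h : i < W.length) :
    perSeq W i = W.getD i 0 := by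
  unfold perSeq
  rw [Nat.mod_eq_of_lt h]

/-! ### Floor facts -/

lemma floor_inv_ge (q : ℝ) (hq0 : 0 < q) (k : ℕ) (hk : q ≤ 1/(k+1)) :
    (k+1 : ℤ) ≤ ⌊1/q⌋ := by
  rw [Int.le_floor]
  push_cast
  rw [le_div_iff₀ hq0]
  have hk1 : (0:ℝ) < (k:ℝ)+1 := by positivity
  calc ((k:ℝ)+1) * q ≤ ((k:ℝ)+1) * (1/((k:ℝ)+1)) := by
        apply mul_le_mul_of_nonneg_left _ hk1.le
        exact_mod_cast hk
    _ = 1 := by field_simp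

lemma kap1_ge (q : ℝ) (hq0 : 0 < q) (k : ℕ) (hk : q ≤ 1/(k+1)) : k ≤ kap q 1 := by
  have h := floor_inv_ge q hq0 k hk
  simp only [kap, reduceIte]
  omega

lemma kap1_ge_one (q : ℝ) (hq0 : 0 < q) (hq2 : q ≤ 1/2) : 1 ≤ kap q 1 := by
  apply kap1_ge q hq0 1
  norm_num [hq2]

lemma kap1_cast (q : ℝ) (hq0 : 0 < q) (hq2 : q ≤ 1/2) :
    (kap q 1 : ℤ) = ⌊1/q⌋ - 1 := by
  have h := floor_inv_ge q hq0 1 (by norm_num [hq2])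
  simp only [kap, reduceIte]
  omega

lemma floor_step (q x : ℝ) (hq0 : 0 < q) (hq2 : q ≤ 1/2) :
    ⌊x/q⌋ + 2 ≤ ⌊(x+1)/q⌋ := by
  have h1q : (2:ℝ) ≤ 1/q := by
    rw [le_div_iff₀ hq0]; linarith
  have h2 : x/q + 2 ≤ (x+1)/q := by
    have : (x+1)/q = x/q + 1/q := by ring
    linarith
  have h3 := Int.floor_le_floor h2
  rwa [show x/q + 2 = x/q + ((2:ℤ):ℝ) by push_cast; ring, Int.floor_add_intCast] at h3

lemma kap_cast (q : ℝ) (hq0 : 0 < q) (hq2 : q ≤ 1/2) (i : ℕ) (hi : 2 ≤ i) :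
    (kap q i : ℤ) = ⌊(i:ℝ)/q⌋ - ⌊((i:ℝ)-1)/q⌋ - 2 := by
  have h := floor_step q ((i:ℝ)-1) hq0 hq2
  rw [show (i:ℝ)-1+1 = (i:ℝ) by ring] at h
  simp only [kap, if_neg (by omega : i ≠ 1)]
  omega

lemma telescope (q : ℝ) (hq0 : 0 < q) (hq2 : q ≤ 1/2) (h1 : kap q 1 = 1) :
    ∀ m, 1 ≤ m → (∀ i, 2 ≤ i → i ≤ m → kap q i = 0) → ⌊(m:ℝ)/q⌋ = 2*m := by
  have hfl1 : ⌊1/q⌋ = 2 := by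
    have := kap1_cast q hq0 hq2
    omega
  intro m
  induction m with
  | zero => omega
  | succ n ih =>
    intro hm hz
    rcases Nat.lt_or_ge 1 (n+1) with h | h
    · have hn : 1 ≤ n := by omega
      have hk := kap_cast q hq0 hq2 (n+1) (by omega)
      rw [hz (n+1) (by omega) le_rfl] at hk
      have he : ((n+1:ℕ):ℝ) - 1 = (n:ℝ) := by push_cast; ring
      rw [he] at hk
      have := ih hn (fun i h1 h2 => hz i h1 (by omega))
      push_cast at hk ⊢
      omega
    · have : n = 0 := by omega
      subst this
      simpa using hfl1
/-! ### Word structure -/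

/-- The block list used in `tailBody q 1 M`. -/
noncomputable def blockF (q : ℝ) (M : ℕ) : List (Fin 2) :=
  ((List.range M).map fun t => (1:Fin 2) :: 1 :: List.replicate (kap q (1 + 1 + t)) 0).flatten

lemma word_struct (q : ℝ) (m : ℕ) :
    cqWord q m ++ [0] =
      1 :: (List.replicate (kap q 1) 0 ++ (blockF q (m-1) ++ [1, 0])) := by
  simp [cqWord, tailBody, blockF, List.append_assoc]

lemma word_length (q : ℝ) (m : ℕ) :
    (cqWord q m ++ [0]).length = kap q 1 + (blockF q (m-1)).length + 3 := by
  rw [word_struct]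
  simp
  omega

lemma blockF_head (q : ℝ) (M : ℕ) :
    (blockF q M ++ [1, 0]).getD 0 0 = 1 := by
  cases M with
  | zero => simp [blockF]
  | succ n =>
    rw [blockF, List.range_succ_eq_map]
    simp

lemma blockF_ones (q : ℝ) : ∀ t0, (∀ t, t < t0 → kap q (1+1+t) = 0) →
    blockF q t0 = List.replicate (2*t0) 1 := by
  intro t0
  induction t0 with
  | zero => simp [blockF]
  | succ n ih =>
    intro h
    rw [blockF, List.range_succ, List.map_append, List.flatten_append]
    rw [show ((List.range n).map fun t => (1:Fin 2) :: 1 :: List.replicate (kap q (1 + 1 + t)) 0).flatten = blockF q n from rfl]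
    rw [ih (fun t ht => h t (by omega))]
    simp [h n (by omega), List.replicate_succ', show 2*(n+1) = 2*n+1+1 by ring, List.append_assoc]

lemma blockF_split (q : ℝ) (M t0 : ℕ) (ht : t0 < M)
    (h : ∀ t, t < t0 → kap q (1+1+t) = 0) :
    ∃ R : List (Fin 2),
      blockF q M = List.replicate (2*t0) 1 ++
        (1 :: 1 :: (List.replicate (kap q (1+1+t0)) 0 ++ R)) := by
  obtain ⟨k, rfl⟩ : ∃ k, M = (t0+1) + k := ⟨M - (t0+1), by omega⟩
  rw [blockF, List.range_add, List.map_append, List.flatten_append,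
    List.range_succ, List.map_append, List.flatten_append]
  rw [show ((List.range t0).map fun t => (1:Fin 2) :: 1 :: List.replicate (kap q (1 + 1 + t)) 0).flatten = blockF q t0 from rfl]
  rw [blockF_ones q t0 h]
  refine ⟨(List.map (fun t => (1:Fin 2) :: 1 :: List.replicate (kap q (1+1+t)) 0)
    (List.map (fun x => t0 + 1 + x) (List.range k))).flatten, ?_⟩
  simp [List.append_assoc]

lemma getD_ones (a b : ℕ) (R : List (Fin 2)) (j : ℕ) (hj : j < a + 2) :
    (List.replicate a (1:Fin 2) ++ (1 :: 1 :: (List.replicate b 0 ++ R))).getD j 0 = 1 := by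
  rcases Nat.lt_or_ge j a with h | h
  · rw [List.getD_append _ _ _ _ (by simpa using h),
      List.getD_eq_getElem _ _ (by simpa using h)]
    simp
  · rw [List.getD_append_right _ _ _ _ (by simpa using h)]
    have : j - a = 0 ∨ j - a = 1 := by omega
    rcases this with h' | h' <;> rw [List.length_replicate, h'] <;> simp

lemma getD_zero_at (a b : ℕ) (R : List (Fin 2)) (hb : 1 ≤ b) :
    (List.replicate a (1:Fin 2) ++ (1 :: 1 :: (List.replicate b 0 ++ R))).getD (a+2) 0 = 0 := by
  rw [List.getD_append_right _ _ _ _ (by simp), List.length_replicate,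
    show a + 2 - a = 2 by omega]
  simp only [List.getD_cons_succ]
  rw [List.getD_append _ _ _ _ (by simpa using (show 0 < b by omega)), List.getD_eq_getElem _ _ (by simpa using (show 0 < b by omega))]
  simp

/-- Basic facts about `c = (c_q 0)^∞`: starts with `1`, then `κ₁` zeros, then `1`. -/
lemma c_facts (q : ℝ) (m : ℕ) :
    perSeq (cqWord q m ++ [0]) 0 = 1 ∧
    (∀ i, 1 ≤ i → i ≤ kap q 1 → perSeq (cqWord q m ++ [0]) i = 0) ∧
    perSeq (cqWord q m ++ [0]) (kap q 1 + 1) = 1 := by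
  have hlen := word_length q m
  refine ⟨?_, ?_, ?_⟩
  · rw [perSeq_eq_getD _ _ (by omega), word_struct]
    simp
  · intro i h1 h2
    rw [perSeq_eq_getD _ _ (by omega), word_struct]
    obtain ⟨j, rfl⟩ : ∃ j, i = j + 1 := ⟨i - 1, by omega⟩
    simp only [List.getD_cons_succ]
    rw [List.getD_append _ _ _ _ (by simp; omega),
      List.getD_eq_getElem _ _ (by simp; omega)]
    simp
  · rw [perSeq_eq_getD _ _ (by omega), word_struct]
    simp only [List.getD_cons_succ]
    rw [List.getD_append_right _ _ _ _ (by simp)]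
    rw [List.length_replicate, show kap q 1 - kap q 1 = 0 from by omega]
    exact blockF_head q (m-1)

/-- Key structural lemma: when `κ₁ = 1`, zeros at blocks `< t0`, and a positive block at `t0`. -/
lemma c_key (q : ℝ) (m t0 : ℕ) (h1 : kap q 1 = 1)
    (h0 : ∀ t, t < t0 → kap q (1+1+t) = 0) (ht0 : t0 < m - 1)
    (hk : 1 ≤ kap q (1+1+t0)) :
    (∀ i, i < 2*t0+4 → perSeq (cqWord q m ++ [0]) i = seq101 i) ∧
    perSeq (cqWord q m ++ [0]) (2*t0+4) = 0 := by
  obtain ⟨R, hR⟩ := blockF_split q (m-1) t0 ht0 h0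
  have hW := word_struct q m
  rw [hR, h1] at hW
  have hW' : cqWord q m ++ [0] = 1 :: 0 ::
      (List.replicate (2*t0) 1 ++
        (1 :: 1 :: (List.replicate (kap q (1+1+t0)) 0 ++ (R ++ [1, 0])))) := by
    rw [hW]
    simp [List.append_assoc]
  have hlen' : 2*t0 + 4 < (cqWord q m ++ [0]).length := by
    rw [hW']
    simp only [List.length_cons, List.length_append, List.length_replicate]
    omega
  constructor
  · intro i hi
    rw [perSeq_eq_getD _ _ (by omega), hW']
    match i with
    | 0 => simp [seq101]
    | 1 => simp [seq101]
    | (j+2) =>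
      simp only [List.getD_cons_succ]
      rw [getD_ones _ _ _ _ (by omega)]
      simp [seq101]
  · rw [perSeq_eq_getD _ _ hlen', hW']
    simp only [show 2*t0+4 = (2*t0+2) + 1 + 1 by omega, List.getD_cons_succ]
    exact getD_zero_at _ _ _ hk
/-! ### Structural lemma for rational q < 1/2 -/

lemma c_struct (q : ℚ) (hq0 : 0 < q) (hq2 : (q:ℝ) < 1/2) :
    ∃ p, 2 ≤ p ∧ Even p ∧
      (∀ i, i < p → perSeq (cqWord (q:ℝ) q.num.toNat ++ [0]) i = seq101 i) ∧
      perSeq (cqWord (q:ℝ) q.num.toNat ++ [0]) p = 0 := by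
  classical
  set m := q.num.toNat with hm
  have hq0' : (0:ℝ) < (q:ℝ) := by exact_mod_cast hq0
  have hq2' : (q:ℝ) ≤ 1/2 := hq2.le
  have hmpos : 1 ≤ m := by
    have := Rat.num_pos.mpr hq0
    omega
  have hk1 : 1 ≤ kap (q:ℝ) 1 := kap1_ge_one _ hq0' hq2'
  obtain ⟨hc0, hcz, -⟩ := c_facts (q:ℝ) m
  rcases Nat.lt_or_ge 1 (kap (q:ℝ) 1) with hbig | hsmall
  · -- κ₁ ≥ 2 : p = 2
    refine ⟨2, le_rfl, by decide, ?_, ?_⟩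
    · intro i hi
      match i with
      | 0 => rw [hc0]; rfl
      | 1 => rw [hcz 1 le_rfl hk1]; rfl
    · exact hcz 2 (by omega) (by omega)
  · have h1 : kap (q:ℝ) 1 = 1 := by omega
    by_cases hall : ∀ t, t < m - 1 → kap (q:ℝ) (1+1+t) = 0
    · exfalso
      have htel : ⌊(m:ℝ)/(q:ℝ)⌋ = 2*m := by
        apply telescope (q:ℝ) hq0' hq2' h1 m hmpos
        intro i h2 hi
        have : kap (q:ℝ) (1+1+(i-2)) = 0 := hall (i-2) (by omega)
        rwa [show 1+1+(i-2) = i by omega] at this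
      have hnum : (q.num : ℝ) = (m : ℝ) := by
        have h := Int.toNat_of_nonneg (Rat.num_pos.mpr hq0).le
        rw [hm]
        exact_mod_cast h.symm
      have hden : (m:ℝ)/(q:ℝ) = (q.den:ℝ) := by
        rw [Rat.cast_def, ← hnum]
        have h1 : (q.num : ℝ) ≠ 0 := by
          have := Rat.num_pos.mpr hq0
          exact_mod_cast this.ne'
        have h2 : (q.den : ℝ) ≠ 0 := by
          exact_mod_cast q.den_nz
        field_simp
      rw [hden, Int.floor_natCast] at htel
      have hden2 : (q.den : ℤ) = 2 * m := by exact_mod_cast htel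
      have : (q:ℝ) = 1/2 := by
        rw [Rat.cast_def, hnum]
        have : (q.den : ℝ) = 2 * m := by exact_mod_cast hden2
        rw [this]
        have hm' : (m:ℝ) ≠ 0 := by positivity
        field_simp
      linarith
    · push_neg at hall
      obtain ⟨t, ht, htne⟩ := hall
      have hex : ∃ t, t < m - 1 ∧ kap (q:ℝ) (1+1+t) ≠ 0 := ⟨t, ht, htne⟩
      obtain ⟨t0, ht0m, ht0ne, hmin⟩ :
          ∃ t0, t0 < m-1 ∧ kap (q:ℝ) (1+1+t0) ≠ 0 ∧ ∀ s, s < t0 → kap (q:ℝ) (1+1+s) = 0 := by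
        refine ⟨Nat.find hex, (Nat.find_spec hex).1, (Nat.find_spec hex).2, ?_⟩
        intro s hs
        by_contra hc
        exact Nat.find_min hex hs ⟨lt_trans hs (Nat.find_spec hex).1, hc⟩
      obtain ⟨hpre, hzero⟩ := c_key (q:ℝ) m t0 h1 hmin ht0m (Nat.one_le_iff_ne_zero.mpr ht0ne)
      exact ⟨2*t0+4, by omega, ⟨t0+2, by ring⟩, hpre, hzero⟩

/-! ### No `c ≺ α` when `α ⪯ 101^∞` -/

lemma seq101_vals : seq101 0 = 1 ∧ seq101 1 = 0 ∧ ∀ i, i ≠ 1 → seq101 i = 1 := by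
  refine ⟨rfl, rfl, fun i hi => ?_⟩
  simp [seq101, hi]

lemma no_lt (α : Bseq) (h0 : α 0 = 1) (h1 : α 1 = 0) (hle : umLE α seq101)
    (c : Bseq) (p : ℕ) (hp2 : 2 ≤ p) (hpe : Even p)
    (hcp : ∀ i, i < p → c i = seq101 i) (hc0 : c p = 0) : ¬ umLT c α := by
  obtain ⟨-, -, h101⟩ := seq101_vals
  have hcv0 : c 0 = 1 := by rw [hcp 0 (by omega)]; rfl
  have hcv1 : c 1 = 0 := by rw [hcp 1 (by omega)]; rfl
  have hcmid : ∀ i, 2 ≤ i → i < p → c i = 1 := by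
    intro i h2 hi
    rw [hcp i hi]
    exact h101 i (by omega)
  -- sum of c up to s ≤ p equals s - 1 + c s
  have hsum : ∀ s, 2 ≤ s → s ≤ p → ∑ i ∈ Finset.range (s+1), ((c i : ℕ)) = s - 1 + (c s : ℕ) := by
    intro s h2 hsp
    rw [Finset.sum_range_succ, sum_front2 c hcv0 hcv1 s h2 (fun i hi1 hi2 => hcmid i hi1 (by omega))]
  rintro ⟨s, hag, hdf, hev⟩
  have hs2 : 2 ≤ s := by
    by_contra hc
    have : s = 0 ∨ s = 1 := by omega
    rcases this with rfl | rfl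
    · rcases hle with ⟨r, hag', hdf', hev'⟩ | rfl
      · exact hdf (hcv0.trans h0.symm)
      · exact hdf (hcv0.trans h0.symm)
    · rcases hle with ⟨r, hag', hdf', hev'⟩ | rfl
      · exact hdf (hcv1.trans h1.symm)
      · exact hdf (hcv1.trans h1.symm)
  rcases hle with ⟨r, hagr, hdfr, hevr⟩ | rfl
  · -- α ≺ 101^∞, first difference at r
    have hr2 : 2 ≤ r := by
      by_contra hc
      have : r = 0 ∨ r = 1 := by omega
      rcases this with rfl | rfl
      · exact hdfr (h0.trans (by rfl))
      · exact hdfr (h1.trans (by rfl))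
    have hαr : α r = 0 := fin2_eq_zero _ (fun hc => hdfr (by rw [hc, h101 r (by omega)]))
    have hαmid : ∀ i, 2 ≤ i → i < r → α i = 1 := by
      intro i h2 hi
      rw [hagr i hi]
      exact h101 i (by omega)
    -- parity of r : odd
    have hrodd : ¬ Even r := by
      have hsα : ∑ i ∈ Finset.range (r+1), ((α i : ℕ)) = r - 1 := by
        rw [Finset.sum_range_succ, sum_front2 α h0 h1 r hr2 hαmid, hαr]
        simp
      rw [hsα] at hevr
      intro hre
      rcases hre with ⟨u, hu⟩
      rcases hevr with ⟨v, hv⟩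
      omega
    -- case analysis on p vs r
    rcases lt_trichotomy p r with hpr | hpr | hpr
    · -- p < r
      rcases lt_trichotomy s p with hsp | hsp | hsp
      · exact hdf (by rw [hcmid s hs2 hsp, hαmid s hs2 (by omega)])
      · subst hsp
        rw [hsum s hs2 le_rfl, hc0] at hev
        rcases hev with ⟨v, hv⟩
        rcases hpe with ⟨u, hu⟩
        simp at hv
        omega
      · have := hag p hsp
        rw [hc0, hαmid p hp2 hpr] at this
        exact absurd this (by decide)
    · -- p = r : parity contradiction
      exact hrodd (hpr ▸ hpe)
    · -- r < p
      rcases lt_trichotomy s r with hsr | hsr | hsr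
      · exact hdf (by rw [hcmid s hs2 (by omega), hαmid s hs2 hsr])
      · subst hsr
        rw [hsum s hs2 (by omega), hcmid s hs2 hpr] at hev
        apply hrodd
        rcases hev with ⟨v, hv⟩
        simp at hv
        exact ⟨v, by omega⟩
      · have := hag r hsr
        rw [hcmid r hr2 hpr, hαr] at this
        exact absurd this (by decide)
  · -- α = 101^∞
    rcases lt_trichotomy s p with hsp | hsp | hsp
    · exact hdf (by rw [hcmid s hs2 hsp, h101 s (by omega)])
    · subst hsp
      rw [hsum s hs2 le_rfl, hc0] at hev
      rcases hev with ⟨v, hv⟩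
      rcases hpe with ⟨u, hu⟩
      simp at hv
      omega
    · have := hag p hsp
      rw [hc0, h101 p (by omega)] at this
      exact absurd this (by decide)
/-! ### The family q = j/(2j+1) -/

lemma family_floor (j : ℕ) (hj : 2 ≤ j) (x : ℕ) (h1 : 1 ≤ x) (hx : x < j) :
    ⌊(x:ℝ) / ((j:ℝ)/(2*(j:ℝ)+1))⌋ = 2*x := by
  have hj0 : (0:ℝ) < (j:ℝ) := by positivity
  have hval : (x:ℝ) / ((j:ℝ)/(2*(j:ℝ)+1)) = (x:ℝ)*(2*(j:ℝ)+1)/(j:ℝ) := by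
    field_simp
  rw [hval]
  rw [Int.floor_eq_iff]
  push_cast
  constructor
  · rw [le_div_iff₀ hj0]
    nlinarith
  · rw [div_lt_iff₀ hj0]
    have hxj : (x:ℝ) < (j:ℝ) := by exact_mod_cast hx
    nlinarith

lemma family_floor_top (j : ℕ) (hj : 2 ≤ j) :
    ⌊(j:ℝ) / ((j:ℝ)/(2*(j:ℝ)+1))⌋ = 2*j+1 := by
  have hj0 : (j:ℝ) ≠ 0 := by positivity
  have hval : (j:ℝ) / ((j:ℝ)/(2*(j:ℝ)+1)) = 2*(j:ℝ)+1 := by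
    field_simp
  rw [hval, show 2*(j:ℝ)+1 = ((2*(j:ℤ)+1 : ℤ):ℝ) by push_cast; ring, Int.floor_intCast]

lemma family_kap (j : ℕ) (hj : 2 ≤ j) :
    kap ((j:ℝ)/(2*(j:ℝ)+1)) 1 = 1 ∧
    (∀ t, t < j - 2 → kap ((j:ℝ)/(2*(j:ℝ)+1)) (1+1+t) = 0) ∧
    1 ≤ kap ((j:ℝ)/(2*(j:ℝ)+1)) (1+1+(j-2)) := by
  set qr : ℝ := (j:ℝ)/(2*(j:ℝ)+1) with hqr
  have hfl : ∀ x : ℕ, 1 ≤ x → x < j → ⌊(x:ℝ)/qr⌋ = 2*x := fun x h1 hx => family_floor j hj x h1 hx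
  refine ⟨?_, ?_, ?_⟩
  · simp only [kap, reduceIte]
    have : ⌊1/qr⌋ = 2 := by
      have := hfl 1 le_rfl (by omega)
      simpa using this
    rw [this]
    rfl
  · intro t ht
    have h2 : (2:ℕ) ≤ 1+1+t := by omega
    simp only [kap, if_neg (by omega : ¬ (1+1+t = 1))]
    have hc : ((1+1+t:ℕ):ℝ) - 1 = ((1+t:ℕ):ℝ) := by push_cast; ring
    rw [hc, hfl (1+1+t) (by omega) (by omega), hfl (1+t) (by omega) (by omega)]
    push_cast
    omega
  · simp only [kap, if_neg (by omega : ¬ (1+1+(j-2) = 1))]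
    have he : 1+1+(j-2) = j := by omega
    rw [he]
    have hc : ((j:ℕ):ℝ) - 1 = ((j-1:ℕ):ℝ) := by
      have : (1:ℝ) ≤ (j:ℝ) := by exact_mod_cast (by omega : 1 ≤ j)
      push_cast [Nat.cast_sub (by omega : 1 ≤ j)]
      ring
    rw [hc, hfl (j-1) (by omega) (by omega), family_floor_top j hj]
    push_cast [Nat.cast_sub (by omega : 1 ≤ j)]
    omega

lemma family_num (j : ℕ) (hj : 2 ≤ j) :
    ((j:ℚ)/(2*(j:ℚ)+1)).num.toNat = j := by
  have hco : Nat.Coprime ((j:ℤ)).natAbs ((2*(j:ℤ)+1)).natAbs := by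
    simp only [Int.natAbs_natCast]
    have h2 : ((2*(j:ℤ)+1)).natAbs = 2*j+1 := by
      rw [show (2*(j:ℤ)+1) = ((2*j+1 : ℕ):ℤ) by push_cast; ring, Int.natAbs_natCast]
    rw [h2]
    have := (Nat.coprime_add_mul_left_right j 1 2).mpr (Nat.coprime_one_right j)
    rwa [show 1 + j*2 = 2*j+1 by ring] at this
  have hnum := Rat.num_div_eq_of_coprime (a := (j:ℤ)) (b := 2*(j:ℤ)+1) (by positivity) hco
  have hcast : (((j:ℤ)):ℚ) / ((2*(j:ℤ)+1 : ℤ):ℚ) = (j:ℚ)/(2*(j:ℚ)+1) := by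
    push_cast
    ring
  rw [hcast] at hnum
  rw [hnum]
  simp

lemma family_cast (j : ℕ) :
    (((j:ℚ)/(2*(j:ℚ)+1) : ℚ) : ℝ) = (j:ℝ)/(2*(j:ℝ)+1) := by
  push_cast
  ring
/-! ### Membership facts for the height set -/

lemma mem_of_alpha10 (q : ℚ) (hq0 : 0 < q) (hq2 : q ≤ 1/2) :
    umLT (perSeq (cqWord (q:ℝ) q.num.toNat ++ [0])) (fun i => if i = 0 then 1 else 0) := by
  have hq0' : (0:ℝ) < (q:ℝ) := by exact_mod_cast hq0
  have hq2' : (q:ℝ) ≤ 1/2 := by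
    rw [show (1/2:ℝ) = ((1/2:ℚ):ℝ) by norm_num]
    exact_mod_cast hq2
  have hk1 : 1 ≤ kap (q:ℝ) 1 := kap1_ge_one _ hq0' hq2'
  obtain ⟨hc0, hcz, hctop⟩ := c_facts (q:ℝ) q.num.toNat
  set c := perSeq (cqWord (q:ℝ) q.num.toNat ++ [0]) with hc
  refine ⟨kap (q:ℝ) 1 + 1, ?_, ?_, ?_⟩
  · intro i hi
    match i with
    | 0 => rw [hc0]; rfl
    | (i+1) =>
      rw [hcz (i+1) (by omega) (by omega)]
      simp
  · rw [hctop]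
    simp
  · rw [Finset.sum_range_succ, sum_front1 c hc0 _ (by omega)
      (fun i h1 h2 => hcz i h1 (by omega)), hctop]
    norm_num

lemma not_mem_small (α : Bseq) (h0 : α 0 = 1) (k : ℕ) (hk2 : 2 ≤ k)
    (hmin : ∀ i, 1 ≤ i → i < k → α i = 0) (hαk : α k = 1)
    (q : ℚ) (hq0 : 0 < q) (hqk : (q:ℝ) ≤ 1/((k:ℝ)+1)) :
    ¬ umLT (perSeq (cqWord (q:ℝ) q.num.toNat ++ [0])) α := by
  have hq0' : (0:ℝ) < (q:ℝ) := by exact_mod_cast hq0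
  have hk1 : k ≤ kap (q:ℝ) 1 := kap1_ge _ hq0' k hqk
  obtain ⟨hc0, hcz, -⟩ := c_facts (q:ℝ) q.num.toNat
  set c := perSeq (cqWord (q:ℝ) q.num.toNat ++ [0]) with hc
  rintro ⟨s, hag, hdf, hev⟩
  rcases lt_trichotomy s k with hsk | hsk | hsk
  · apply hdf
    match s with
    | 0 => rw [hc0, h0]
    | (i+1) => rw [hcz (i+1) (by omega) (by omega), hmin (i+1) (by omega) hsk]
  · subst hsk
    rw [Finset.sum_range_succ, sum_front1 c hc0 _ (by omega)
      (fun i h1 h2 => hcz i h1 (by omega)), hcz s (by omega) (by omega)] at hev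
    simp at hev
  · have := hag k hsk
    rw [hcz k (by omega) (by omega), hαk] at this
    exact absurd this (by decide)

lemma mem_of_gt (α : Bseq) (r : ℕ) (hr2 : 2 ≤ r) (hre : Even r)
    (hag : ∀ i, i < r → α i = seq101 i) (hαr : α r = 0) :
    ∃ q : ℚ, 0 < q ∧ q ≤ 1/2 ∧ (q:ℝ) < 1/2 ∧
      umLT (perSeq (cqWord (q:ℝ) q.num.toNat ++ [0])) α := by
  obtain ⟨-, -, h101⟩ := seq101_vals
  set j := r/2 + 1 with hj
  have hj2 : 2 ≤ j := by
    rcases hre with ⟨u, hu⟩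
    omega
  have hrj : r = 2*j - 2 := by
    rcases hre with ⟨u, hu⟩
    omega
  set q : ℚ := (j:ℚ)/(2*(j:ℚ)+1) with hq
  have hnum : q.num.toNat = j := family_num j hj2
  have hcast : (q:ℝ) = (j:ℝ)/(2*(j:ℝ)+1) := family_cast j
  obtain ⟨hk1, hkz, hkp⟩ := family_kap j hj2
  have hq0 : 0 < q := by
    rw [hq]
    positivity
  have hqlt : (q:ℝ) < 1/2 := by
    rw [hcast, div_lt_iff₀ (by positivity)]
    have : (0:ℝ) < (j:ℝ) := by
      have : (0:ℕ) < j := by omega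
      exact_mod_cast this
    linarith
  have hqle : q ≤ 1/2 := by
    have := hqlt.le
    rw [show (1/2:ℝ) = ((1/2:ℚ):ℝ) by norm_num] at this
    exact_mod_cast this
  refine ⟨q, hq0, hqle, hqlt, ?_⟩
  obtain ⟨hpre, -⟩ := c_key (q:ℝ) j (j-2) (hcast ▸ hk1) (fun t ht => hcast ▸ hkz t ht)
    (by omega) (hcast ▸ hkp)
  rw [hnum]
  set c := perSeq (cqWord (q:ℝ) j ++ [0]) with hc
  have hpre' : ∀ i, i ≤ r → c i = seq101 i := by
    intro i hi
    apply hpre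
    omega
  refine ⟨r, ?_, ?_, ?_⟩
  · intro i hi
    rw [hpre' i (by omega), hag i hi]
  · rw [hpre' r le_rfl, hαr, h101 r (by omega)]
    decide
  · have hc0 : c 0 = 1 := by rw [hpre' 0 (by omega)]; rfl
    have hc1 : c 1 = 0 := by rw [hpre' 1 (by omega)]; rfl
    rw [Finset.sum_range_succ, sum_front2 c hc0 hc1 r hr2
      (fun i hi1 hi2 => by rw [hpre' i (by omega)]; exact h101 i (by omega)),
      hpre' r le_rfl, h101 r (by omega)]
    simp only [Fin.val_one]
    rcases hre with ⟨u, hu⟩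
    exact ⟨u, by omega⟩

lemma extract_r (α : Bseq) (h0 : α 0 = 1) (h1 : α 1 = 0) (h : umLT seq101 α) :
    ∃ r, 2 ≤ r ∧ Even r ∧ (∀ i, i < r → α i = seq101 i) ∧ α r = 0 := by
  obtain ⟨-, -, h101⟩ := seq101_vals
  obtain ⟨r, hag, hdf, hev⟩ := h
  have hr2 : 2 ≤ r := by
    by_contra hc
    have : r = 0 ∨ r = 1 := by omega
    rcases this with rfl | rfl
    · exact hdf (h0.symm ▸ rfl)
    · exact hdf (h1.symm ▸ rfl)
  have hαr : α r = 0 := by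
    apply fin2_eq_zero
    intro hc
    exact hdf (by rw [hc, h101 r (by omega)])
  refine ⟨r, hr2, ?_, fun i hi => (hag i hi).symm, hαr⟩
  have hs : ∑ i ∈ Finset.range (r+1), ((seq101 i : ℕ)) = r := by
    rw [Finset.sum_range_succ, sum_front2 seq101 rfl rfl r hr2
      (fun i hi1 hi2 => h101 i (by omega)), h101 r (by omega)]
    simp only [Fin.val_one]
    omega
  rwa [hs] at hev
/-- For `α ∈ KS`: `q(α) = 0 ↔ α = 10^∞`, and `q(α) = 1/2 ↔ α ⪯ 101^∞`. -/
theorem stmt11 (α : Bseq) (hα : KSseq α) :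
    (height α = 0 ↔ α = fun i => if i = 0 then 1 else 0) ∧
    (height α = 1 / 2 ↔ umLE α seq101) := by
  classical
  obtain ⟨hmax, h0, h1⟩ := hα
  set S : Set ℝ := {x : ℝ | ∃ q : ℚ, x = (q : ℝ) ∧ 0 < q ∧ q ≤ 1 / 2 ∧
    umLT (perSeq (cqWord (q : ℝ) q.num.toNat ++ [0])) α} with hS
  have hheight : height α = sInf (S ∪ {1/2}) := by
    unfold height
    rw [hS]
  have hlb0 : ∀ x ∈ S ∪ {(1/2 : ℝ)}, (0:ℝ) ≤ x := by
    rintro x (⟨q, rfl, hq0, -, -⟩ | hx)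
    · exact le_of_lt (by exact_mod_cast hq0)
    · rw [Set.mem_singleton_iff] at hx
      rw [hx]
      norm_num
  have hbdd : BddBelow (S ∪ {(1/2 : ℝ)}) := ⟨0, hlb0⟩
  have hne : (S ∪ {(1/2 : ℝ)}).Nonempty := ⟨1/2, Or.inr rfl⟩
  refine ⟨⟨?_, ?_⟩, ?_, ?_⟩
  · -- height = 0 → α = 10^∞
    intro hz
    by_contra hne10
    have hex : ∃ k, α k ≠ if k = 0 then 1 else 0 := by
      by_contra hc
      push_neg at hc
      exact hne10 (funext hc)
    obtain ⟨k, hk, hmin⟩ : ∃ k, (α k ≠ if k = 0 then 1 else 0) ∧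
        ∀ i, i < k → α i = if i = 0 then 1 else 0 := by
      refine ⟨Nat.find hex, Nat.find_spec hex, fun i hi => ?_⟩
      have := Nat.find_min hex hi
      simpa using this
    have hk2 : 2 ≤ k := by
      by_contra hc
      have : k = 0 ∨ k = 1 := by omega
      rcases this with rfl | rfl
      · exact hk (by simpa using h0)
      · exact hk (by simpa using h1)
    have hαk : α k = 1 := by
      apply fin2_eq_one
      intro hc
      exact hk (by rw [hc, if_neg (by omega : ¬ k = 0)])
    have hmin' : ∀ i, 1 ≤ i → i < k → α i = 0 := by
      intro i hi1 hi2
      rw [hmin i hi2, if_neg (by omega : ¬ i = 0)]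
    have hlb : ∀ x ∈ S ∪ {(1/2 : ℝ)}, min (1/((k:ℝ)+1)) (1/2) ≤ x := by
      rintro x (⟨q, rfl, hq0, hq2, hlt⟩ | hx)
      · rcases le_or_gt (1/((k:ℝ)+1)) (q:ℝ) with h | h
        · exact (min_le_left _ _).trans h
        · exact absurd hlt (not_mem_small α h0 k hk2 hmin' hαk q hq0 h.le)
      · rw [Set.mem_singleton_iff] at hx
        rw [hx]
        exact min_le_right _ _
    have hge := le_csInf hne hlb
    rw [hheight] at hz
    rw [hz] at hge
    have hpos : (0:ℝ) < min (1/((k:ℝ)+1)) (1/2) := by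
      apply lt_min <;> positivity
    linarith
  · -- α = 10^∞ → height = 0
    intro h10
    rw [hheight]
    apply le_antisymm
    · by_contra hgt
      push_neg at hgt
      obtain ⟨n, hn⟩ := exists_nat_one_div_lt hgt
      set q : ℚ := 1/((n:ℚ)+2) with hqdef
      have hq0 : 0 < q := by positivity
      have hq2 : q ≤ 1/2 := by
        rw [hqdef]
        apply one_div_le_one_div_of_le (by norm_num)
        have : (0:ℚ) ≤ (n:ℚ) := by positivity
        linarith
      have hmem : (q:ℝ) ∈ S ∪ {(1/2 : ℝ)} :=
        Or.inl ⟨q, rfl, hq0, hq2, by rw [h10]; exact mem_of_alpha10 q hq0 hq2⟩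
      have hle' := csInf_le hbdd hmem
      have hqval : (q:ℝ) = 1/((n:ℝ)+2) := by
        rw [hqdef]
        push_cast
        ring
      have hstep : (1:ℝ)/((n:ℝ)+2) ≤ 1/((n:ℝ)+1) := by
        apply one_div_le_one_div_of_le (by positivity)
        linarith
      rw [hqval] at hle'
      linarith
    · exact le_csInf hne hlb0
  · -- height = 1/2 → α ⪯ 101^∞
    intro hh
    by_contra hnle
    have hne' : α ≠ seq101 := fun he => hnle (Or.inr he)
    have hlt : umLT seq101 α := by
      rcases umLT_total α seq101 hne' with h | h
      · exact absurd (Or.inl h) hnle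
      · exact h
    obtain ⟨r, hr2, hre, hag, hαr⟩ := extract_r α h0 h1 hlt
    obtain ⟨q, hq0, hq2, hqlt, hq⟩ := mem_of_gt α r hr2 hre hag hαr
    have hmem : (q:ℝ) ∈ S ∪ {(1/2 : ℝ)} := Or.inl ⟨q, rfl, hq0, hq2, hq⟩
    have hle' := csInf_le hbdd hmem
    rw [hheight] at hh
    rw [hh] at hle'
    linarith
  · -- α ⪯ 101^∞ → height = 1/2
    intro hle
    have hT : S ∪ {(1/2 : ℝ)} = {(1/2 : ℝ)} := by
      ext x
      constructor
      · rintro (⟨q, rfl, hq0, hq2, hlt⟩ | hx)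
        · have hq2' : (q:ℝ) ≤ 1/2 := by
            rw [show (1/2:ℝ) = ((1/2:ℚ):ℝ) by norm_num]
            exact_mod_cast hq2
          rcases eq_or_lt_of_le hq2' with he | hlt2
          · rw [Set.mem_singleton_iff]
            exact he
          · exfalso
            obtain ⟨p, hp2, hpe, hcp, hc0⟩ := c_struct q hq0 hlt2
            exact no_lt α h0 h1 hle _ p hp2 hpe hcp hc0 hlt
        · exact hx
      · intro hx
        exact Or.inr hx
    rw [hheight, hT, csInf_singleton]
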